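/- Let (X, w) be a weighted pure d-dimensional simplicial complex and let 0 ≤ j ≤ i ≤ k ≤ d. Then every i-level k-cochain (with respect to localization) is also a j-level k-cochain: if f ∈ C^k(X; ℝ) satisfies ⟨f_σ, 1⟩_{X_σ} = 0 for every σ ∈ X(i−1), then ⟨f_σ, 1⟩_{X_σ} = 0 for every σ ∈ X(j−1). -/

import Mathlib

/-!
Weighted pure simplicial complexes, links, cochains, signless differentials
and high dimensional random walk operators.

Conventions: faces are `Finset`s of vertices. A cochain "of dimension `k`"
(an element of `C^k(X;ℝ)`) is represented by a function `Finset V → ℝ`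
evaluated on faces of **cardinality** `c = k + 1`; all operators are indexed
by cardinality.
-/

open Finset

namespace HDRW

noncomputable section

variable {V : Type*} [DecidableEq V] [Fintype V]

/-- A weighted family of faces (the data of a weighted complex or of a link). -/
structure WFam (V : Type*) [DecidableEq V] [Fintype V] where
  faces : Finset (Finset V)
  w : Finset V → ℝ

namespace WFam

/-- The faces of cardinality `c` (i.e. of dimension `c - 1`). -/
def dimFaces (Y : WFam V) (c : ℕ) : Finset (Finset V) :=
  Y.faces.filter fun σ => σ.card = c

/-- The link of a face `τ`, as a weighted family; the weights are
`w_τ(s) = w (s ∪ τ) / (C(|s| + |τ|, |τ|) * w τ)`. -/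
def link (Y : WFam V) (τ : Finset V) : WFam V where
  faces := Finset.univ.powerset.filter fun s => Disjoint s τ ∧ s ∪ τ ∈ Y.faces
  w := fun s => Y.w (s ∪ τ) / (((s.card + τ.card).choose τ.card : ℝ) * Y.w τ)

/-- The inner product of two `c`-cochains: `⟨f, g⟩ = Σ_{σ} w σ * f σ * g σ`. -/
def inner (Y : WFam V) (c : ℕ) (f g : Finset V → ℝ) : ℝ :=
  ∑ σ ∈ Y.dimFaces c, Y.w σ * (f σ * g σ)

/-- The squared norm `‖f‖² = ⟨f, f⟩` of a `c`-cochain. -/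
def norm2 (Y : WFam V) (c : ℕ) (f : Finset V → ℝ) : ℝ := Y.inner c f f

end WFam

/-- The signless differential `d` from cochains on faces of cardinality `c`
(dimension `c-1`) to cochains on faces of cardinality `c+1`:
`(d f)(σ) = (1/(c+1)) Σ_{τ ⊆ σ, |τ| = c} f τ`. -/
def sDiff (c : ℕ) (f : Finset V → ℝ) : Finset V → ℝ :=
  fun σ => ((c : ℝ) + 1)⁻¹ * ∑ τ ∈ σ.powerset.filter (fun τ => τ.card = c), f τ

/-- Iterated signless differential `C_a → C_{a+n}` (in cardinality indexing),
i.e. `d_{a+n-2} ⋯ d_{a-1}` in dimension indexing. -/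
def sDiffIter (a : ℕ) : ℕ → (Finset V → ℝ) → (Finset V → ℝ)
  | 0, f => f
  | n + 1, f => sDiff (a + n) (sDiffIter a n f)

namespace WFam

/-- The adjoint `d^*` of the signless differential, from cochains on faces of
cardinality `c+1` to cochains on faces of cardinality `c`; it is given by the
explicit formula `(d^* f)(τ) = Σ_{σ ∈ X(c), τ ⊆ σ} w_τ(σ ∖ τ) * f σ` (a sum
over the cardinality-`(c+1)` faces containing `τ`). -/
def sAdj (Y : WFam V) (c : ℕ) (f : Finset V → ℝ) : Finset V → ℝ :=
  fun τ => ∑ σ ∈ (Y.dimFaces (c + 1)).filter (fun σ => τ ⊆ σ),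
    (Y.link τ).w (σ \ τ) * f σ

/-- Iterated adjoint of the signless differential, `C_{a+n} → C_a`
(in cardinality indexing), i.e. `d_{a-1}^* ⋯ d_{a+n-2}^*`. -/
def sAdjIter (Y : WFam V) : ℕ → ℕ → (Finset V → ℝ) → (Finset V → ℝ)
  | _, 0, f => f
  | a, n + 1, f => Y.sAdj a (sAdjIter Y (a + 1) n f)

/-- The non-lazy up-down random walk operator `M⁺` on cochains of cardinality
`c` (dimension `k = c-1`): `(M⁺ f)(σ) = (1/(k+1)) Σ_{τ, σ ∪ τ ∈ X(k+1)} w_σ(τ∖σ) f τ`. -/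
def nonLazy (Y : WFam V) (c : ℕ) (f : Finset V → ℝ) : Finset V → ℝ :=
  fun σ => (c : ℝ)⁻¹ *
    ∑ τ ∈ (Y.dimFaces c).filter (fun τ => σ ∪ τ ∈ Y.dimFaces (c + 1)),
      (Y.link σ).w (τ \ σ) * f τ

/-- The (lazy) up-down random walk operator `U` on cochains of cardinality `c`
(dimension `k = c-1`):
`(U f)(σ) = (1/(k+2)) f σ + (1/(k+2)) Σ_{τ, σ ∪ τ ∈ X(k+1)} w_σ(τ∖σ) f τ`. -/
def upDown (Y : WFam V) (c : ℕ) (f : Finset V → ℝ) : Finset V → ℝ :=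
  fun σ => ((c : ℝ) + 1)⁻¹ * f σ + ((c : ℝ) + 1)⁻¹ *
    ∑ τ ∈ (Y.dimFaces c).filter (fun τ => σ ∪ τ ∈ Y.dimFaces (c + 1)),
      (Y.link σ).w (τ \ σ) * f τ

/-- The down-up random walk operator `D` on cochains of cardinality `c`
(dimension `k = c-1`). -/
def downUp (Y : WFam V) (c : ℕ) (f : Finset V → ℝ) : Finset V → ℝ :=
  fun σ => (c : ℝ)⁻¹ *
      (∑ τ' ∈ σ.powerset.filter (fun τ' => τ'.card = c - 1), (Y.link τ').w (σ \ τ')) * f σ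
    + (c : ℝ)⁻¹ *
      ∑ τ ∈ (Y.dimFaces c).filter (fun τ => τ ≠ σ ∧ σ ∩ τ ∈ Y.dimFaces (c - 1)),
        (Y.link (σ ∩ τ)).w (τ \ σ) * f τ

/-- The `i`-down-up operator `D^i = d ⋯ d d^* ⋯ d^*` (going down `i+1` steps and
back up) on cochains of cardinality `c` (dimension `k = c-1`); in dimension
indexing this is `D_k^i = d_{k-1} ⋯ d_{k-i-1} d_{k-i-1}^* ⋯ d_{k-1}^*`. -/
def downUpIter (Y : WFam V) (c i : ℕ) (f : Finset V → ℝ) : Finset V → ℝ :=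
  sDiffIter (c - (i + 1)) (i + 1) (Y.sAdjIter (c - (i + 1)) (i + 1) f)

/-- `Y` (through its 1-skeleton) is a `γ`-(one sided) spectral expander:
every function on the vertices orthogonal to the constants has Rayleigh
quotient of the non-lazy random walk at most `γ` (Rayleigh characterization of
"the second largest eigenvalue of `M₀⁺` is at most `γ`"). -/
def isExpander (Y : WFam V) (γ : ℝ) : Prop :=
  ∀ f : Finset V → ℝ, Y.inner 1 f (fun _ => 1) = 0 →
    Y.inner 1 (Y.nonLazy 1 f) f ≤ γ * Y.norm2 1 f

/-- `Y` (through its 1-skeleton) is connected: the eigenvalue `1` of the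
non-lazy random walk `M₀⁺` has multiplicity one, i.e. every nonzero function on
the vertices orthogonal to the constants has Rayleigh quotient strictly
less than `1`. -/
def isConnected (Y : WFam V) : Prop :=
  ∀ f : Finset V → ℝ, Y.inner 1 f (fun _ => 1) = 0 → Y.norm2 1 f ≠ 0 →
    Y.inner 1 (Y.nonLazy 1 f) f < Y.norm2 1 f

/-- `f` is an `i`-level cochain of cardinality `c` (dimension `k = c-1`) with
respect to localization: for every face `σ` of cardinality `i` (i.e. of
dimension `i-1`), the localization `f_σ` is orthogonal to the constants in the
link `X_σ`. -/
def isLevel (Y : WFam V) (i c : ℕ) (f : Finset V → ℝ) : Prop :=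
  ∀ σ ∈ Y.dimFaces i,
    (Y.link σ).inner (c - i) (fun s => f (σ ∪ s)) (fun _ => 1) = 0

/-- `f` is a proper `i`-level cochain of cardinality `c`: it is an `i`-level
cochain which is in addition orthogonal to every `(i+1)`-level cochain. -/
def isProperLevel (Y : WFam V) (i c : ℕ) (f : Finset V → ℝ) : Prop :=
  Y.isLevel i c f ∧ ∀ g : Finset V → ℝ, Y.isLevel (i + 1) c g → Y.inner c f g = 0

end WFam

/-- The coboundary operator on oriented cochains (represented by their values
on the increasing ordering of each face, with respect to a linear order on the
vertices): `(δ f)(σ) = Σ_{j} (-1)^j f(σ ∖ {j-th smallest element of σ})`. -/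
def coboundary {V : Type*} [LinearOrder V] [Fintype V] (f : Finset V → ℝ) :
    Finset V → ℝ :=
  fun σ => ∑ v ∈ σ, (-1 : ℝ) ^ (σ.filter (fun u => u < v)).card * f (σ.erase v)

/-- A weighted pure `d`-dimensional simplicial complex: a downward closed
family of faces, each contained in a face of cardinality `d+1`
(dimension `d`), together with a weight function `w : X → (0, 1]` summing to
`1` on the top faces and satisfying the averaging recurrence on lower faces. -/
structure WSC (V : Type*) [DecidableEq V] [Fintype V] (d : ℕ) extends WFam V where
  empty_mem : ∅ ∈ faces
  down_closed : ∀ ⦃σ⦄, σ ∈ faces → ∀ ⦃τ⦄, τ ⊆ σ → τ ∈ faces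
  isPure : ∀ σ ∈ faces, ∃ σ' ∈ faces, σ ⊆ σ' ∧ σ'.card = d + 1
  w_pos : ∀ σ ∈ faces, 0 < w σ
  w_le_one : ∀ σ ∈ faces, w σ ≤ 1
  w_sum_top : ∑ σ ∈ faces.filter (fun σ => σ.card = d + 1), w σ = 1
  w_down : ∀ τ ∈ faces, τ.card ≤ d →
    w τ = (((d + 1).choose τ.card : ℝ))⁻¹ *
      ∑ σ ∈ faces.filter (fun σ => σ.card = d + 1 ∧ τ ⊆ σ), w σ


variable {d : ℕ}

/-- The link-inner product of a localization with the constant `1` equals a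
(rescaled) sum over the top faces containing `σ`. -/
lemma linkInner_eq (X : WSC V d) (f : Finset V → ℝ) (c : ℕ) (σ : Finset V) :
    (X.toWFam.link σ).inner c (fun s => f (σ ∪ s)) (fun _ => 1)
      = ∑ τ ∈ X.faces.filter (fun τ => τ.card = c + σ.card ∧ σ ⊆ τ),
          X.w τ / (((c + σ.card).choose σ.card : ℝ) * X.w σ) * f τ := by
  unfold WFam.inner WFam.dimFaces WFam.link
  simp only
  refine Finset.sum_nbij' (fun s => σ ∪ s) (fun τ => τ \ σ) ?_ ?_ ?_ ?_ ?_
  · intro s hs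
    simp only [Finset.mem_filter, Finset.mem_powerset, Finset.mem_univ,
      Finset.subset_univ, true_and] at hs ⊢
    obtain ⟨⟨hdisj, hmem⟩, hcard⟩ := hs
    rw [Finset.union_comm] at hmem
    refine ⟨hmem, ?_, Finset.subset_union_left⟩
    rw [Finset.card_union_of_disjoint (Finset.disjoint_of_subset_right
      Finset.Subset.rfl hdisj.symm), hcard, Nat.add_comm]
  · intro τ hτ
    simp only [Finset.mem_filter, Finset.mem_powerset, Finset.mem_univ,
      Finset.subset_univ, true_and] at hτ ⊢
    obtain ⟨hmem, hcard, hsub⟩ := hτ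
    refine ⟨⟨Finset.sdiff_disjoint, ?_⟩, ?_⟩
    · rw [Finset.sdiff_union_of_subset hsub]; exact hmem
    · rw [Finset.card_sdiff_of_subset hsub, hcard, Nat.add_sub_cancel]
  · intro s hs
    simp only [Finset.mem_filter, Finset.mem_powerset, Finset.mem_univ,
      Finset.subset_univ, true_and] at hs
    show (σ ∪ s) \ σ = s
    rw [Finset.union_comm, Finset.union_sdiff_cancel_right hs.1.1]
  · intro τ hτ
    simp only [Finset.mem_filter, Finset.mem_powerset, Finset.mem_univ,
      Finset.subset_univ, true_and] at hτ
    show σ ∪ τ \ σ = τ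
    rw [Finset.union_comm, Finset.sdiff_union_of_subset hτ.2.2]
  · intro s hs
    simp only [Finset.mem_filter, Finset.mem_powerset, Finset.mem_univ,
      Finset.subset_univ, true_and] at hs
    obtain ⟨⟨hdisj, _⟩, hcard⟩ := hs
    show _ = X.w (σ ∪ s) / _ * f (σ ∪ s)
    rw [hcard, Finset.union_comm σ s]
    ring

/-- The number of `i`-element intermediate faces between `σ` and `τ`. -/
lemma card_between (σ τ : Finset V) (hsub : σ ⊆ τ) (i : ℕ) (hij : σ.card ≤ i) :
    (τ.powerset.filter (fun ρ => ρ.card = i ∧ σ ⊆ ρ)).card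
      = (τ.card - σ.card).choose (i - σ.card) := by
  rw [← Finset.card_sdiff_of_subset hsub, ← Finset.card_powersetCard (i - σ.card) (τ \ σ)]
  refine Finset.card_nbij' (fun ρ => ρ \ σ) (fun s => s ∪ σ) ?_ ?_ ?_ ?_
  · intro ρ hρ
    simp only [Finset.mem_coe, Finset.mem_filter, Finset.mem_powerset,
      Finset.mem_powersetCard] at hρ ⊢
    obtain ⟨hsubτ, hcard, hσρ⟩ := hρ
    exact ⟨Finset.sdiff_subset_sdiff hsubτ Finset.Subset.rfl,
      by rw [Finset.card_sdiff_of_subset hσρ, hcard]⟩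
  · intro s hs
    simp only [Finset.mem_coe, Finset.mem_filter, Finset.mem_powerset,
      Finset.mem_powersetCard] at hs ⊢
    obtain ⟨hsubs, hcards⟩ := hs
    have hdisj : Disjoint s σ :=
      Finset.disjoint_of_subset_left hsubs Finset.sdiff_disjoint
    refine ⟨Finset.union_subset (hsubs.trans Finset.sdiff_subset) hsub, ?_,
      Finset.subset_union_right⟩
    rw [Finset.card_union_of_disjoint hdisj, hcards]
    omega
  · intro ρ hρ
    simp only [Finset.mem_coe, Finset.mem_filter, Finset.mem_powerset] at hρ
    exact Finset.sdiff_union_of_subset hρ.2.2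
  · intro s hs
    simp only [Finset.mem_coe, Finset.mem_powersetCard] at hs
    exact Finset.union_sdiff_cancel_right
      (Finset.disjoint_of_subset_left hs.1 Finset.sdiff_disjoint)

/-- Double counting: vanishing of the weighted sums over top faces containing
each `i`-face implies the same for a `j`-face. -/
lemma key_sum (X : WSC V d) (j i k : ℕ) (hji : j ≤ i) (hik : i ≤ k)
    (f : Finset V → ℝ)
    (hS : ∀ ρ ∈ X.faces, ρ.card = i →
      ∑ τ ∈ X.faces.filter (fun τ => τ.card = k + 1 ∧ ρ ⊆ τ), X.w τ * f τ = 0)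
    (σ : Finset V) (hσ : σ ∈ X.faces) (hcard : σ.card = j) :
    ∑ τ ∈ X.faces.filter (fun τ => τ.card = k + 1 ∧ σ ⊆ τ), X.w τ * f τ = 0 := by
  set T := X.faces.filter (fun τ => τ.card = k + 1 ∧ σ ⊆ τ) with hT
  set R := X.faces.filter (fun ρ => ρ.card = i ∧ σ ⊆ ρ) with hR
  have h0 : ∑ ρ ∈ R, ∑ τ ∈ T, (if ρ ⊆ τ then X.w τ * f τ else 0) = 0 := by
    refine Finset.sum_eq_zero ?_
    intro ρ hρ
    rw [hR, Finset.mem_filter] at hρ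
    have hTρ : T.filter (fun τ => ρ ⊆ τ)
        = X.faces.filter (fun τ => τ.card = k + 1 ∧ ρ ⊆ τ) := by
      rw [hT, Finset.filter_filter]
      apply Finset.filter_congr
      intro τ _
      constructor
      · rintro ⟨⟨h1, _⟩, h3⟩; exact ⟨h1, h3⟩
      · rintro ⟨h1, h3⟩; exact ⟨⟨h1, hρ.2.2.trans h3⟩, h3⟩
    rw [← Finset.sum_filter, hTρ]
    exact hS ρ hρ.1 hρ.2.1
  rw [Finset.sum_comm] at h0
  have h1 : ∀ τ ∈ T, ∑ ρ ∈ R, (if ρ ⊆ τ then X.w τ * f τ else 0)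
      = ((k + 1 - j).choose (i - j) : ℝ) * (X.w τ * f τ) := by
    intro τ hτ
    rw [hT, Finset.mem_filter] at hτ
    have hRτ : R.filter (fun ρ => ρ ⊆ τ)
        = τ.powerset.filter (fun ρ => ρ.card = i ∧ σ ⊆ ρ) := by
      ext ρ
      simp only [hR, Finset.mem_filter, Finset.mem_powerset]
      constructor
      · rintro ⟨⟨_, h2, h3⟩, h4⟩; exact ⟨h4, h2, h3⟩
      · rintro ⟨h4, h2, h3⟩; exact ⟨⟨X.down_closed hτ.1 h4, h2, h3⟩, h4⟩
    rw [← Finset.sum_filter, Finset.sum_const, hRτ,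
      card_between σ τ hτ.2.2 i (by omega), hτ.2.1, hcard, nsmul_eq_mul]
  rw [Finset.sum_congr rfl h1, ← Finset.mul_sum] at h0
  have hN : ((k + 1 - j).choose (i - j) : ℝ) ≠ 0 := by
    have : 0 < (k + 1 - j).choose (i - j) := Nat.choose_pos (by omega)
    positivity
  exact (mul_eq_zero.mp h0).resolve_left hN

/-- For `0 ≤ j ≤ i ≤ k ≤ d`, every `i`-level `k`-cochain with
respect to localization is also a `j`-level cochain: if
`⟨f_σ, 1⟩_{X_σ} = 0` for every `σ ∈ X(i-1)`, then `⟨f_σ, 1⟩_{X_σ} = 0` for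
every `σ ∈ X(j-1)`. -/
theorem isLevel_mono (X : WSC V d) (j i k : ℕ) (hji : j ≤ i) (hik : i ≤ k)
    (hk : k ≤ d) (f : Finset V → ℝ) (hf : X.toWFam.isLevel i (k + 1) f) :
    X.toWFam.isLevel j (k + 1) f := by
  intro σ hσ
  simp only [WFam.dimFaces, Finset.mem_filter] at hσ
  obtain ⟨hσf, hσc⟩ := hσ
  rw [linkInner_eq, hσc]
  have hcc : k + 1 - j + j = k + 1 := by omega
  rw [hcc]
  have hS : ∀ ρ ∈ X.faces, ρ.card = i →
      ∑ τ ∈ X.faces.filter (fun τ => τ.card = k + 1 ∧ ρ ⊆ τ),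
        X.w τ * f τ = 0 := by
    intro ρ hρf hρc
    have hρ : ρ ∈ X.toWFam.dimFaces i := by
      simp only [WFam.dimFaces, Finset.mem_filter]; exact ⟨hρf, hρc⟩
    have := hf ρ hρ
    rw [linkInner_eq, hρc, (by omega : k + 1 - i + i = k + 1)] at this
    have hA : (((k + 1).choose i : ℝ) * X.w ρ) ≠ 0 := by
      have h1 : 0 < (k + 1).choose i := Nat.choose_pos (by omega)
      have h2 := X.w_pos ρ hρf
      positivity
    have heq : ∑ τ ∈ X.faces.filter (fun τ => τ.card = k + 1 ∧ ρ ⊆ τ),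
        X.w τ / (((k + 1).choose i : ℝ) * X.w ρ) * f τ
        = (((k + 1).choose i : ℝ) * X.w ρ)⁻¹ *
          ∑ τ ∈ X.faces.filter (fun τ => τ.card = k + 1 ∧ ρ ⊆ τ),
            X.w τ * f τ := by
      rw [Finset.mul_sum]
      exact Finset.sum_congr rfl fun τ _ => by rw [div_eq_mul_inv]; ring
    rw [heq] at this
    exact (mul_eq_zero.mp this).resolve_left (inv_ne_zero hA)
  have hkey := key_sum X j i k hji hik f hS σ hσf hσc
  have heq : ∑ τ ∈ X.faces.filter (fun τ => τ.card = k + 1 ∧ σ ⊆ τ),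
      X.w τ / (((k + 1).choose j : ℝ) * X.w σ) * f τ
      = (((k + 1).choose j : ℝ) * X.w σ)⁻¹ *
        ∑ τ ∈ X.faces.filter (fun τ => τ.card = k + 1 ∧ σ ⊆ τ),
          X.w τ * f τ := by
    rw [Finset.mul_sum]
    refine Finset.sum_congr rfl fun τ _ => ?_
    rw [div_eq_mul_inv]; ring
  rw [heq, hkey, mul_zero]


end

end HDRW
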